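/- In the road-closure model, the twisted increment of the total number in system under the α-twist has mean α·(d/dγ)[log(F(γ)G(γ)/γ)] evaluated at γ = α, and this mean is strictly positive. -/

import Mathlib

private lemma slope_le_aux {α : ℝ} (hα : 1 < α) :
    ∀ k : ℕ, α ^ k - α ≤ ((k : ℝ) - 1) * (α - 1) * α ^ k := by
  intro k
  induction k with
  | zero =>
    simp only [pow_zero, Nat.cast_zero]
    nlinarith
  | succ k ih =>
    have h0 : (0 : ℝ) < α := by linarith
    have h1 : (1 : ℝ) ≤ α ^ k := one_le_pow₀ hα.le
    rw [pow_succ]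
    push_cast
    nlinarith [mul_le_mul_of_nonneg_right ih h0.le,
      mul_nonneg (mul_nonneg (sub_nonneg.2 hα.le) h0.le) (sub_nonneg.2 h1)]

private lemma slope_lt_aux {α : ℝ} (hα : 1 < α) :
    ∀ k : ℕ, 2 ≤ k → α ^ k - α < ((k : ℝ) - 1) * (α - 1) * α ^ k := by
  intro k hk
  induction k with
  | zero => omega
  | succ k ih =>
    have h0 : (0 : ℝ) < α := by linarith
    have h1 : (1 : ℝ) ≤ α ^ k := one_le_pow₀ hα.le
    rcases Nat.lt_or_ge k 2 with hk2 | hk2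
    · interval_cases k
      · omega
      · push_cast
        rw [pow_succ, pow_one]
        nlinarith [mul_pos h0 (mul_pos (sub_pos.2 hα) (sub_pos.2 hα))]
    · have ihs := ih hk2
      rw [pow_succ]
      push_cast
      nlinarith [mul_lt_mul_of_pos_right ihs h0,
        mul_nonneg (mul_nonneg (sub_nonneg.2 hα.le) h0.le) (sub_nonneg.2 h1)]

set_option maxHeartbeats 1600000 in
/-- The twisted mean increment of the total number in system equals
    α·(log ψ)′(α) where ψ(γ) = F(γ)G(γ)/γ, and it is strictly positive. -/
theorem road_closure_twisted_drift_positive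
    (f g : ℕ → ℝ) (hf0 : ∀ n, 0 ≤ f n) (hg0 : ∀ n, 0 ≤ g n)
    (hf1 : ∑' n, f n = 1) (hg1 : ∑' n, g n = 1)
    (hFfin : ∀ γ : ℝ, 0 ≤ γ → Summable (fun n => f n * γ ^ n))
    (hGfin : ∀ γ : ℝ, 0 ≤ γ → Summable (fun n => g n * γ ^ n))
    (hmean : (∑' n : ℕ, (n : ℝ) * f n) + (∑' n : ℕ, (n : ℝ) * g n) < 1)
    (hfpos : ∃ n, 1 ≤ n ∧ 0 < f n) (hgpos : ∃ n, 1 ≤ n ∧ 0 < g n)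
    (α : ℝ) (hα : 1 < α)
    (htwist : (∑' n, f n * α ^ n) * (∑' n, g n * α ^ n) / α = 1) :
    (∑' n : ℕ, ∑' m : ℕ,
        ((n : ℝ) + (m : ℝ) - 1) * (f n * α ^ n * (g m * α ^ m)) / α) =
      α * deriv (fun γ : ℝ =>
        Real.log ((∑' n, f n * γ ^ n) * (∑' n, g n * γ ^ n) / γ)) α ∧
    0 < α * deriv (fun γ : ℝ =>
        Real.log ((∑' n, f n * γ ^ n) * (∑' n, g n * γ ^ n) / γ)) α := by
  obtain ⟨n₀, hn₀, hfn₀⟩ := hfpos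
  obtain ⟨m₀, hm₀, hgm₀⟩ := hgpos
  have hα0 : (0 : ℝ) < α := lt_trans one_pos hα
  -- Abbreviations
  set A : ℝ := ∑' n, f n * α ^ n with hA_def
  set B : ℝ := ∑' n, g n * α ^ n with hB_def
  have hAB : A * B = α := by
    rw [div_eq_one_iff_eq hα0.ne'] at htwist
    exact htwist
  -- basic summabilities
  have ha0 : ∀ n, 0 ≤ f n * α ^ n := fun n => mul_nonneg (hf0 n) (pow_nonneg hα0.le n)
  have hb0 : ∀ n, 0 ≤ g n * α ^ n := fun n => mul_nonneg (hg0 n) (pow_nonneg hα0.le n)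
  have hsa : Summable (fun n => f n * α ^ n) := hFfin α hα0.le
  have hsb : Summable (fun n => g n * α ^ n) := hGfin α hα0.le
  have hsf : Summable f := by simpa using hFfin 1 zero_le_one
  have hsg : Summable g := by simpa using hGfin 1 zero_le_one
  -- summability of n ↦ n * h n * α ^ n
  have key : ∀ (h : ℕ → ℝ), (∀ n, 0 ≤ h n) → (∀ γ : ℝ, 0 ≤ γ → Summable (fun n => h n * γ ^ n)) →
      Summable (fun n : ℕ => (n : ℝ) * (h n * α ^ n)) := by
    intro h h0 hfin
    refine Summable.of_nonneg_of_le
      (fun n => mul_nonneg (Nat.cast_nonneg n) (mul_nonneg (h0 n) (pow_nonneg hα0.le n)))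
      (fun n => ?_) (hfin (2 * α) (by linarith))
    have h2 : (n : ℝ) ≤ 2 ^ n := by exact_mod_cast (Nat.lt_two_pow_self (n := n)).le
    calc (n : ℝ) * (h n * α ^ n) ≤ 2 ^ n * (h n * α ^ n) :=
          mul_le_mul_of_nonneg_right h2 (mul_nonneg (h0 n) (pow_nonneg hα0.le n))
      _ = h n * (2 * α) ^ n := by rw [mul_pow]; ring
  have hsa' : Summable (fun n : ℕ => (n : ℝ) * (f n * α ^ n)) := key f hf0 hFfin
  have hsb' : Summable (fun n : ℕ => (n : ℝ) * (g n * α ^ n)) := key g hg0 hGfin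
  set A' : ℝ := ∑' n : ℕ, (n : ℝ) * (f n * α ^ n) with hA'_def
  set B' : ℝ := ∑' n : ℕ, (n : ℝ) * (g n * α ^ n) with hB'_def
  -- product summabilities
  have Pab : Summable (fun p : ℕ × ℕ => (f p.1 * α ^ p.1) * (g p.2 * α ^ p.2)) :=
    hsa.mul_of_nonneg hsb ha0 hb0
  have P2 : Summable (fun p : ℕ × ℕ => ((p.1 : ℝ) * (f p.1 * α ^ p.1)) * (g p.2 * α ^ p.2)) :=
    hsa'.mul_of_nonneg hsb (fun n => mul_nonneg (Nat.cast_nonneg n) (ha0 n)) hb0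
  have P3 : Summable (fun p : ℕ × ℕ => (f p.1 * α ^ p.1) * ((p.2 : ℝ) * (g p.2 * α ^ p.2))) :=
    hsa.mul_of_nonneg hsb' ha0 (fun n => mul_nonneg (Nat.cast_nonneg n) (hb0 n))
  have P0 : Summable (fun p : ℕ × ℕ => f p.1 * g p.2) :=
    hsf.mul_of_nonneg hsg hf0 hg0
  have Tab : A * B = ∑' p : ℕ × ℕ, (f p.1 * α ^ p.1) * (g p.2 * α ^ p.2) :=
    Summable.tsum_mul_tsum hsa hsb Pab
  have T2 : A' * B = ∑' p : ℕ × ℕ, ((p.1 : ℝ) * (f p.1 * α ^ p.1)) * (g p.2 * α ^ p.2) :=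
    Summable.tsum_mul_tsum hsa' hsb P2
  have T3 : A * B' = ∑' p : ℕ × ℕ, (f p.1 * α ^ p.1) * ((p.2 : ℝ) * (g p.2 * α ^ p.2)) :=
    Summable.tsum_mul_tsum hsa hsb' P3
  have T0 : (1 : ℝ) = ∑' p : ℕ × ℕ, f p.1 * g p.2 := by
    have := Summable.tsum_mul_tsum hsf hsg P0
    rw [hf1, hg1] at this
    simpa using this
  -- the main weight function on pairs
  set w : ℕ × ℕ → ℝ :=
    fun p => ((p.1 : ℝ) + (p.2 : ℝ) - 1) * ((f p.1 * α ^ p.1) * (g p.2 * α ^ p.2)) with hw_def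
  have hw_eq : w = fun p => ((p.1 : ℝ) * (f p.1 * α ^ p.1)) * (g p.2 * α ^ p.2)
      + (f p.1 * α ^ p.1) * ((p.2 : ℝ) * (g p.2 * α ^ p.2))
      - (f p.1 * α ^ p.1) * (g p.2 * α ^ p.2) := by
    funext p; simp only [hw_def]; ring
  have hw : Summable w := by rw [hw_eq]; exact (P2.add P3).sub Pab
  have Tw : ∑' p, w p = A' * B + A * B' - A * B := by
    rw [hw_eq, Summable.tsum_sub (P2.add P3) Pab, Summable.tsum_add P2 P3, ← T2, ← T3, ← Tab]
  -- the comparison function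
  set l : ℕ × ℕ → ℝ :=
    fun p => ((f p.1 * α ^ p.1) * (g p.2 * α ^ p.2) - α * (f p.1 * g p.2)) / (α - 1) with hl_def
  have hl : Summable l := (Pab.sub (P0.mul_left α)).div_const _
  have Tl : ∑' p, l p = 0 := by
    simp only [hl_def]
    rw [tsum_div_const, Summable.tsum_sub Pab (P0.mul_left α), tsum_mul_left, ← Tab, ← T0, hAB]
    simp
  have hab_prod : ∀ n m : ℕ, (f n * α ^ n) * (g m * α ^ m) = f n * g m * α ^ (n + m) := by
    intro n m; rw [pow_add]; ring
  have hle : ∀ p : ℕ × ℕ, l p ≤ w p := by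
    rintro ⟨n, m⟩
    simp only [hl_def, hw_def]
    rw [div_le_iff₀ (by linarith : (0 : ℝ) < α - 1)]
    have hcast : ((n + m : ℕ) : ℝ) = (n : ℝ) + (m : ℝ) := by push_cast; ring
    calc (f n * α ^ n) * (g m * α ^ m) - α * (f n * g m)
        = (f n * g m) * (α ^ (n + m) - α) := by rw [hab_prod]; ring
      _ ≤ (f n * g m) * ((((n + m : ℕ) : ℝ) - 1) * (α - 1) * α ^ (n + m)) :=
          mul_le_mul_of_nonneg_left (slope_le_aux hα (n + m))
            (mul_nonneg (hf0 n) (hg0 m))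
      _ = ((n : ℝ) + (m : ℝ) - 1) * ((f n * α ^ n) * (g m * α ^ m)) * (α - 1) := by
          rw [hab_prod, hcast]; ring
  have hlt : l (n₀, m₀) < w (n₀, m₀) := by
    simp only [hl_def, hw_def]
    rw [div_lt_iff₀ (by linarith : (0 : ℝ) < α - 1)]
    have hcast : ((n₀ + m₀ : ℕ) : ℝ) = (n₀ : ℝ) + (m₀ : ℝ) := by push_cast; ring
    calc (f n₀ * α ^ n₀) * (g m₀ * α ^ m₀) - α * (f n₀ * g m₀)
        = (f n₀ * g m₀) * (α ^ (n₀ + m₀) - α) := by rw [hab_prod]; ring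
      _ < (f n₀ * g m₀) * ((((n₀ + m₀ : ℕ) : ℝ) - 1) * (α - 1) * α ^ (n₀ + m₀)) :=
          (mul_lt_mul_iff_right₀ (mul_pos hfn₀ hgm₀)).2 (slope_lt_aux hα (n₀ + m₀) (by omega))
      _ = ((n₀ : ℝ) + (m₀ : ℝ) - 1) * ((f n₀ * α ^ n₀) * (g m₀ * α ^ m₀)) * (α - 1) := by
          rw [hab_prod, hcast]; ring
  have hpos : 0 < ∑' p, w p := by
    rw [← Tl]
    exact Summable.tsum_lt_tsum hle hlt hl hw
  -- the iterated sum equals the product sum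
  have hiter : (∑' n : ℕ, ∑' m : ℕ,
      ((n : ℝ) + (m : ℝ) - 1) * (f n * α ^ n * (g m * α ^ m)) / α) = (∑' p, w p) / α := by
    rw [← tsum_div_const, Summable.tsum_prod (hw.div_const α)]
  -- derivative of the power series
  have hderivF : ∀ (h : ℕ → ℝ), (∀ n, 0 ≤ h n) → (∀ γ : ℝ, 0 ≤ γ → Summable (fun n => h n * γ ^ n)) →
      HasDerivAt (fun γ : ℝ => ∑' n, h n * γ ^ n) (∑' n : ℕ, (n : ℝ) * h n * α ^ (n - 1)) α := by
    intro h h0 hfin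
    have h2pos : (0 : ℝ) < 2 * (α + 1) := by linarith
    have hu : Summable (fun n => h n * (2 * (α + 1)) ^ n) := hfin _ h2pos.le
    refine hasDerivAt_tsum_of_isPreconnected (𝕜 := ℝ) (F := ℝ)
      (g := fun n γ => h n * γ ^ n) (g' := fun n γ => (n : ℝ) * h n * γ ^ (n - 1))
      (t := Set.Ioo (0 : ℝ) (α + 1)) hu isOpen_Ioo isPreconnected_Ioo
      (fun n y _ => ?_) (fun n y hy => ?_) (show α ∈ Set.Ioo (0 : ℝ) (α + 1) from
        ⟨hα0, by linarith⟩) (hfin α hα0.le) (⟨hα0, by linarith⟩ : α ∈ Set.Ioo (0 : ℝ) (α + 1))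
    · have := (hasDerivAt_pow n y).const_mul (h n)
      exact this.congr_deriv (by ring)
    · obtain ⟨hy0, hy1⟩ := hy
      have hyn : (0 : ℝ) ≤ (n : ℝ) * h n * y ^ (n - 1) :=
        mul_nonneg (mul_nonneg (Nat.cast_nonneg n) (h0 n)) (pow_nonneg hy0.le _)
      rw [Real.norm_eq_abs, abs_of_nonneg hyn]
      have hstep1 : y ^ (n - 1) ≤ (α + 1) ^ (n - 1) :=
        pow_le_pow_left₀ hy0.le hy1.le _
      have hstep2 : (α + 1) ^ (n - 1) ≤ (α + 1) ^ n :=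
        pow_le_pow_right₀ (by linarith) (Nat.sub_le n 1)
      have hstep3 : (n : ℝ) ≤ 2 ^ n := by exact_mod_cast (Nat.lt_two_pow_self (n := n)).le
      calc (n : ℝ) * h n * y ^ (n - 1)
          ≤ (n : ℝ) * h n * (α + 1) ^ n := by
            refine mul_le_mul_of_nonneg_left (hstep1.trans hstep2)
              (mul_nonneg (Nat.cast_nonneg n) (h0 n))
        _ ≤ 2 ^ n * h n * (α + 1) ^ n := by
            refine mul_le_mul_of_nonneg_right
              (mul_le_mul_of_nonneg_right hstep3 (h0 n)) (pow_nonneg (by linarith) n)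
        _ = h n * (2 * (α + 1)) ^ n := by rw [mul_pow]; ring
  have HF : HasDerivAt (fun γ : ℝ => ∑' n, f n * γ ^ n) (∑' n : ℕ, (n : ℝ) * f n * α ^ (n - 1)) α :=
    hderivF f hf0 hFfin
  have HG : HasDerivAt (fun γ : ℝ => ∑' n, g n * γ ^ n) (∑' n : ℕ, (n : ℝ) * g n * α ^ (n - 1)) α :=
    hderivF g hg0 hGfin
  set dF : ℝ := ∑' n : ℕ, (n : ℝ) * f n * α ^ (n - 1) with hdF_def
  set dG : ℝ := ∑' n : ℕ, (n : ℝ) * g n * α ^ (n - 1) with hdG_def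
  have hdF : α * dF = A' := by
    rw [hdF_def, ← tsum_mul_left, hA'_def]
    refine tsum_congr fun n => ?_
    cases n with
    | zero => simp
    | succ n => simp only [Nat.add_sub_cancel, pow_succ]; push_cast; ring
  have hdG : α * dG = B' := by
    rw [hdG_def, ← tsum_mul_left, hB'_def]
    refine tsum_congr fun n => ?_
    cases n with
    | zero => simp
    | succ n => simp only [Nat.add_sub_cancel, pow_succ]; push_cast; ring
  -- derivative of the quotient and the log
  have Hh : HasDerivAt (fun γ : ℝ => (∑' n, f n * γ ^ n) * (∑' n, g n * γ ^ n) / γ)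
      (((dF * B + A * dG) * α - A * B * 1) / α ^ 2) α :=
    (HF.mul HG).div (hasDerivAt_id α) hα0.ne'
  have hval : A * B / α ≠ 0 := by rw [htwist]; exact one_ne_zero
  have Hlog : HasDerivAt (fun γ : ℝ =>
      Real.log ((∑' n, f n * γ ^ n) * (∑' n, g n * γ ^ n) / γ))
      ((((dF * B + A * dG) * α - A * B * 1) / α ^ 2) / (A * B / α)) α := Hh.log hval
  have hderiv : deriv (fun γ : ℝ =>
      Real.log ((∑' n, f n * γ ^ n) * (∑' n, g n * γ ^ n) / γ)) α
      = (((dF * B + A * dG) * α - A * B * 1) / α ^ 2) / (A * B / α) := Hlog.deriv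
  have hkey : α * ((((dF * B + A * dG) * α - A * B * 1) / α ^ 2) / (A * B / α))
      = (∑' p, w p) / α := by
    rw [Tw, ← hdF, ← hdG, hAB]
    field_simp
  constructor
  · rw [hiter, hderiv, hkey]
  · rw [hderiv, hkey]
    exact div_pos hpos hα0
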